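/- Let G be a finite group and u a torsion element of V(ZG) satisfying the PAP Property (PAP(k) holds for all k). If u has order n > 1 then \varepsilon_{G[d]}(u) = 0 for every proper divisor d of n, where G[d] is the set of elements of G of order d. (Uses the Berman–Higman theorem \varepsilon_{\{1\}}(u^m) = 0 for u^m \ne 1, assumed as hypothesis.) -/

import Mathlib

open Finset MonoidAlgebra
open scoped Classical

noncomputable section

variable {G : Type*} [Group G] [Fintype G]

/-- Partial sum of coefficients of `a ∈ ℤG` over a subset `X` of `G`. -/
def pa (a : MonoidAlgebra ℤ G) (X : Finset G) : ℤ := ∑ x ∈ X, a.coeff x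

/-- Partial augmentation of `a ∈ ℤG` at the conjugacy class `C`. -/
def paC (a : MonoidAlgebra ℤ G) (C : ConjClasses G) : ℤ :=
  ∑ x ∈ Finset.univ.filter (fun x => ConjClasses.mk x = C), a.coeff x

/-- The condition PAP(k) for a unit `u` of `ℤG`. -/
def PAP (u : (MonoidAlgebra ℤ G)ˣ) (k : ℤ) : Prop :=
  ∀ C : ConjClasses G,
    paC (↑(u ^ k)) C =
      ∑ D : ConjClasses G,
        if ∃ x : G, ConjClasses.mk x = D ∧ ConjClasses.mk (x ^ k) = C
        then paC (↑u) D else 0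

lemma IsConj.orderOf_eq' {x y : G} (h : IsConj x y) : orderOf x = orderOf y := by
  obtain ⟨c, hc⟩ := h
  exact hc.orderOf_eq

/-- If `u ∈ V(ℤG)` has order `n > 1` and satisfies the PAP Property, then (using
Berman–Higman for the powers of `u`) `ε_{G[d]}(u) = 0` for every proper divisor `d`
of `n`. -/
theorem pa_elements_of_order_proper_divisor_eq_zero
    (u : (MonoidAlgebra ℤ G)ˣ) (n : ℕ) (hn : 1 < n) (hord : orderOf u = n)
    (haug : ∑ x : G, (↑u : MonoidAlgebra ℤ G).coeff x = 1)
    (hPAP : ∀ k : ℤ, PAP u k)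
    (hBH : ∀ m : ℤ, u ^ m ≠ 1 → (↑(u ^ m) : MonoidAlgebra ℤ G).coeff 1 = 0) :
    ∀ d : ℕ, d ∣ n → d ≠ n →
      pa (↑u) (Finset.univ.filter (fun g : G => orderOf g = d)) = 0 := by
  have hn0 : n ≠ 0 := by omega
  -- Key consequence of PAP + Berman-Higman:
  have key : ∀ d : ℕ, d ∣ n → d ≠ n →
      ∑ x ∈ Finset.univ.filter (fun x : G => orderOf x ∣ d),
        (↑u : MonoidAlgebra ℤ G).coeff x = 0 := by
    intro d hdvd hne
    have hd0 : d ≠ 0 := fun h => hn0 (by simpa [h] using hdvd)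
    have hdlt : d < n := lt_of_le_of_ne (Nat.le_of_dvd (by omega) hdvd) hne
    have hune : u ^ (d : ℤ) ≠ 1 := by
      rw [zpow_natCast]
      intro h
      have := orderOf_dvd_of_pow_eq_one h
      rw [hord] at this
      exact absurd (Nat.le_of_dvd (by omega) this) (by omega)
    have hP := hPAP (d : ℤ) (ConjClasses.mk (1 : G))
    -- LHS of hP is the coefficient of u^d at 1, which is 0 by Berman-Higman
    have hfib1 : (Finset.univ.filter
        (fun x : G => ConjClasses.mk x = ConjClasses.mk (1 : G))) = {1} := by
      ext x
      simp [ConjClasses.mk_eq_mk_iff_isConj, isConj_one_left]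
    have hL : paC (↑(u ^ (d : ℤ))) (ConjClasses.mk (1 : G)) = 0 := by
      rw [paC, hfib1, Finset.sum_singleton]
      exact hBH d hune
    rw [hL] at hP
    -- Rewrite the RHS of hP as a sum over elements with x ^ d = 1
    have hR : ∑ D : ConjClasses G,
        (if ∃ x : G, ConjClasses.mk x = D ∧
            ConjClasses.mk (x ^ (d : ℤ)) = ConjClasses.mk (1 : G)
          then paC (↑u) D else 0) =
        ∑ x ∈ Finset.univ.filter (fun x : G => orderOf x ∣ d),
          (↑u : MonoidAlgebra ℤ G).coeff x := by
      have hmaps : ∀ x ∈ Finset.univ.filter (fun x : G => orderOf x ∣ d),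
          ConjClasses.mk x ∈ (Finset.univ : Finset (ConjClasses G)) := fun _ _ =>
        Finset.mem_univ _
      rw [Finset.sum_filter]
      rw [← Finset.sum_fiberwise_of_maps_to
        (fun x (_ : x ∈ (Finset.univ : Finset G)) =>
          Finset.mem_univ (ConjClasses.mk x))
        (fun x => if orderOf x ∣ d then (↑u : MonoidAlgebra ℤ G).coeff x else 0)]
      refine Finset.sum_congr rfl fun D _ => ?_
      by_cases h : ∃ x : G, ConjClasses.mk x = D ∧
          ConjClasses.mk (x ^ (d : ℤ)) = ConjClasses.mk (1 : G)
      · obtain ⟨y, hyD, hy1⟩ := h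
        have hy : orderOf y ∣ d := by
          rw [ConjClasses.mk_eq_mk_iff_isConj, isConj_one_left, zpow_natCast] at hy1
          exact orderOf_dvd_of_pow_eq_one hy1
        rw [if_pos ⟨y, hyD, hy1⟩, paC]
        refine Finset.sum_congr rfl fun x hx => ?_
        rw [Finset.mem_filter] at hx
        have : orderOf x ∣ d := by
          have hconj : IsConj y x := by
            rw [← ConjClasses.mk_eq_mk_iff_isConj, hyD, hx.2]
          rw [← hconj.orderOf_eq']
          exact hy
        rw [if_pos this]
      · rw [if_neg h]
        refine (Finset.sum_eq_zero fun x hx => ?_).symm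
        rw [Finset.mem_filter] at hx
        rw [if_neg]
        intro hxd
        exact h ⟨x, hx.2, by
          rw [ConjClasses.mk_eq_mk_iff_isConj, isConj_one_left, zpow_natCast]
          exact orderOf_dvd_iff_pow_eq_one.mp hxd⟩
    rw [hR] at hP
    exact hP.symm
  -- Now strong induction on d
  intro d
  induction d using Nat.strong_induction_on with
  | _ d ih =>
    intro hdvd hne
    have hd0 : d ≠ 0 := fun h => hn0 (by simpa [h] using hdvd)
    have hdlt : d < n := lt_of_le_of_ne (Nat.le_of_dvd (by omega) hdvd) hne
    have hsplit : ∑ x ∈ Finset.univ.filter (fun x : G => orderOf x ∣ d),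
        (↑u : MonoidAlgebra ℤ G).coeff x =
        ∑ e ∈ d.divisors,
          pa (↑u) (Finset.univ.filter (fun g : G => orderOf g = e)) := by
      rw [← Finset.sum_fiberwise_of_maps_to
        (fun x hx => Nat.mem_divisors.mpr ⟨(Finset.mem_filter.mp hx).2, hd0⟩)
        (fun x => (↑u : MonoidAlgebra ℤ G).coeff x)]
      refine Finset.sum_congr rfl fun e he => ?_
      rw [pa]
      refine Finset.sum_congr ?_ fun _ _ => rfl
      ext x
      simp only [Finset.mem_filter, Finset.mem_univ, true_and, and_iff_right_iff_imp]
      rintro rfl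
      exact (Nat.mem_divisors.mp he).1
    have h0 := key d hdvd hne
    rw [hsplit] at h0
    rw [Finset.sum_eq_single_of_mem d (Nat.mem_divisors_self d hd0)
      (fun e he hed => ih e (lt_of_le_of_ne (Nat.le_of_dvd (by omega)
        (Nat.mem_divisors.mp he).1) hed) (dvd_trans (Nat.mem_divisors.mp he).1 hdvd)
        (fun h => absurd (h ▸ Nat.le_of_dvd (by omega) (Nat.mem_divisors.mp he).1)
          (by omega)))] at h0
    exact h0

end
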